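/- Let p be an odd prime, O = ℤ_p[θ] with θ a primitive p-th root of unity, and G = O ⋊ C_p where the generator τ of C_p acts as multiplication by θ. Then γ_i(G) = (θ−1)^{i−1}O for all i ≥ 2, and γ_i(G)/γ_{i+1}(G) ≅ C_p. -/

import Mathlib

set_option maxHeartbeats 1000000
set_option synthInstance.maxHeartbeats 400000

/-- The multiplicative automorphism of `Multiplicative A` induced by an additive
automorphism of `A`. -/
def toMulAut {A : Type} [AddGroup A] (e : AddAut A) : MulAut (Multiplicative A) where
  toFun x := Multiplicative.ofAdd (e (Multiplicative.toAdd x))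
  invFun x := Multiplicative.ofAdd (e.symm (Multiplicative.toAdd x))
  left_inv x := by simp
  right_inv x := by simp
  map_mul' x y := by
    show Multiplicative.ofAdd (e (Multiplicative.toAdd x + Multiplicative.toAdd y)) = _
    rw [map_add]
    rfl

/-- Multiplication by the unit `u` as an automorphism of the additive group of `R`,
viewed multiplicatively. -/
def thetaAut {R : Type} [CommRing R] (u : Rˣ) : MulAut (Multiplicative R) :=
  toMulAut (DistribMulAction.toAddAut Rˣ R u)

/-- The group `G = R ⋊ ⟨θ⟩`, where the cyclic group generated by the automorphism
"multiplication by the unit `u` (= θ)" acts on the additive group of `R`. -/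
abbrev GpGrp (R : Type) [CommRing R] (u : Rˣ) : Type :=
  Multiplicative R ⋊[(Subgroup.zpowers (thetaAut u)).subtype] (Subgroup.zpowers (thetaAut u))

/-- The element `τ` (the generator of the acting cyclic group) in `G = R ⋊ ⟨θ⟩`. -/
def tauEl (R : Type) [CommRing R] (u : Rˣ) : GpGrp R u :=
  SemidirectProduct.inr ⟨thetaAut u, Subgroup.mem_zpowers _⟩

/-- The translation element corresponding to `v ∈ R` in `G = R ⋊ ⟨θ⟩`. -/
def trEl (R : Type) [CommRing R] (u : Rˣ) (v : R) : GpGrp R u :=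
  SemidirectProduct.inl (Multiplicative.ofAdd v)

/-- The subgroup of `G = R ⋊ ⟨θ⟩` given by the translations lying in the ideal `I`. -/
def transSub (R : Type) [CommRing R] (u : Rˣ) (I : Ideal R) : Subgroup (GpGrp R u) :=
  Subgroup.map SemidirectProduct.inl (AddSubgroup.toSubgroup I.toAddSubgroup)

namespace MaxClassAux

open SemidirectProduct
open scoped commutatorElement

variable {R : Type} [CommRing R] (u : Rˣ)

/-- `thetaAut` as a monoid hom. -/
def thetaHom (R : Type) [CommRing R] : Rˣ →* MulAut (Multiplicative R) :=
  MonoidHom.mk' thetaAut (fun a b => by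
    ext x
    show Multiplicative.ofAdd ((a * b) • Multiplicative.toAdd x) = _
    rw [mul_smul]
    rfl)

lemma thetaAut_apply (x : Multiplicative R) :
    thetaAut u x = Multiplicative.ofAdd ((u : R) * Multiplicative.toAdd x) := rfl

lemma thetaAut_zpow_apply (a : ℤ) (x : Multiplicative R) :
    (thetaAut u ^ a) x = Multiplicative.ofAdd (((u ^ a : Rˣ) : R) * Multiplicative.toAdd x) := by
  have : thetaAut u ^ a = thetaHom R (u ^ a) := by
    rw [map_zpow]; rfl
  rw [this]; rfl

lemma mem_transSub {I : Ideal R} {g : GpGrp R u} :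
    g ∈ transSub R u I ↔ ∃ v ∈ I, g = trEl R u v := by
  constructor
  · rintro ⟨x, hx, rfl⟩
    exact ⟨Multiplicative.toAdd x, hx, rfl⟩
  · rintro ⟨v, hv, rfl⟩
    exact ⟨Multiplicative.ofAdd v, hv, rfl⟩

lemma trEl_mem_transSub {I : Ideal R} {v : R} (hv : v ∈ I) :
    trEl R u v ∈ transSub R u I :=
  (mem_transSub u).2 ⟨v, hv, rfl⟩

lemma commutator_general (g₁ g₂ : GpGrp R u) (a b : ℤ)
    (ha : ((g₁.right : Subgroup.zpowers (thetaAut u)) : MulAut (Multiplicative R)) = thetaAut u ^ a)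
    (hb : ((g₂.right : Subgroup.zpowers (thetaAut u)) : MulAut (Multiplicative R)) = thetaAut u ^ b) :
    ⁅g₁, g₂⁆ = trEl R u ((1 - ((u ^ b : Rˣ) : R)) * Multiplicative.toAdd g₁.left
      + (((u ^ a : Rˣ) : R) - 1) * Multiplicative.toAdd g₂.left) := by
  have hcomm : g₁.right * g₂.right = g₂.right * g₁.right := by
    ext
    simp only [Subgroup.coe_mul, ha, hb]
    exact (Commute.zpow_zpow_self (thetaAut u) a b).symm ▸ rfl
  ext
  · have h2 : (g₁ * g₂ * g₁⁻¹).right = g₂.right := by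
      simp only [mul_right, inv_right]
      rw [hcomm, mul_inv_cancel_right]
    simp only [commutatorElement_def, trEl, left_inl, mul_left, inv_left, inv_right,
      Subgroup.coe_subtype, Subgroup.coe_mul, Subgroup.coe_inv, ha, hb]
    rw [show (g₁ * g₂).right = g₁.right * g₂.right from rfl, h2]
    simp only [Subgroup.coe_mul, ha, hb, ← zpow_neg, ← zpow_add]
    apply Multiplicative.toAdd.injective
    simp only [thetaAut_zpow_apply, toAdd_mul, toAdd_ofAdd, toAdd_inv]
    have e1 : ((u ^ (a + b) : Rˣ) : R) * ((u ^ (-a) : Rˣ) : R) = ((u ^ b : Rˣ) : R) := by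
      rw [← Units.val_mul, ← zpow_add]
      norm_num
    have e2 : ((u ^ b : Rˣ) : R) * ((u ^ (-b) : Rˣ) : R) = 1 := by
      rw [← Units.val_mul, ← zpow_add]
      norm_num
    have e3 : ∀ y : R, Multiplicative.toAdd (α := R) y = y := fun _ => rfl
    simp only [e3]
    linear_combination (-(Multiplicative.toAdd g₁.left)) * e1 + (-(Multiplicative.toAdd g₂.left)) * e2
  · simp only [commutatorElement_def, trEl, right_inl, mul_right, inv_right]
    rw [hcomm]
    group

lemma zpow_mem_span (p : ℕ) (hp : u ^ p = 1) (hp0 : p ≠ 0) (b : ℤ) :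
    ((u ^ b : Rˣ) : R) - 1 ∈ Ideal.span {(u : R) - 1} := by
  have hpz : (p : ℤ) ≠ 0 := by exact_mod_cast hp0
  have h1 : u ^ b = u ^ ((b % p).toNat) := by
    have : u ^ b = u ^ (b % p + p * (b / p)) := by rw [Int.emod_add_mul_ediv]
    rw [this, zpow_add, zpow_mul, zpow_natCast, hp, one_zpow, mul_one,
      ← zpow_natCast, Int.toNat_of_nonneg (Int.emod_nonneg b hpz)]
  rw [h1, Units.val_pow_eq_pow_val, Ideal.mem_span_singleton]
  simpa using sub_dvd_pow_sub_pow (u : R) 1 ((b % p).toNat)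

lemma right_trEl_coe (v : R) :
    (((trEl R u v).right : Subgroup.zpowers (thetaAut u)) : MulAut (Multiplicative R))
      = thetaAut u ^ (0 : ℤ) := by
  simp [trEl]

lemma right_tauEl_coe :
    (((tauEl R u).right : Subgroup.zpowers (thetaAut u)) : MulAut (Multiplicative R))
      = thetaAut u ^ (1 : ℤ) := by
  simp [tauEl]

lemma commutator_trEl_tau (z : R) :
    ⁅trEl R u (-z), tauEl R u⁆ = trEl R u (((u : R) - 1) * z) := by
  rw [commutator_general u _ _ 0 1 (right_trEl_coe u _) (right_tauEl_coe u)]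
  have : (1 - ((u ^ (1 : ℤ) : Rˣ) : R)) * Multiplicative.toAdd (trEl R u (-z)).left
      + (((u ^ (0 : ℤ) : Rˣ) : R) - 1) * Multiplicative.toAdd (tauEl R u).left
      = ((u : R) - 1) * z := by
    simp [trEl, tauEl]
    ring
  rw [this]

lemma commutator_transSub_top (p : ℕ) (hp : u ^ p = 1) (hp0 : p ≠ 0) (I : Ideal R) :
    ⁅transSub R u I, ⊤⁆ = transSub R u (Ideal.span {(u : R) - 1} * I) := by
  apply le_antisymm
  · rw [Subgroup.commutator_le]
    intro g₁ hg₁ g₂ _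
    obtain ⟨v, hv, rfl⟩ := (mem_transSub u).1 hg₁
    obtain ⟨b, hb⟩ := g₂.right.2
    rw [commutator_general u _ _ 0 b (right_trEl_coe u _) hb.symm]
    apply trEl_mem_transSub
    have h1 : (1 - ((u ^ b : Rˣ) : R)) * Multiplicative.toAdd (trEl R u v).left
        ∈ Ideal.span {(u : R) - 1} * I := by
      have h0 := neg_mem (zpow_mem_span u p hp hp0 b)
      rw [neg_sub] at h0
      simpa [trEl] using Ideal.mul_mem_mul h0 hv
    have h2 : (((u ^ (0 : ℤ) : Rˣ) : R) - 1) * Multiplicative.toAdd g₂.left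
        ∈ Ideal.span {(u : R) - 1} * I := by
      simp
    exact add_mem h1 h2
  · intro g hg
    obtain ⟨w, hw, rfl⟩ := (mem_transSub u).1 hg
    obtain ⟨z, hz, hzw⟩ := Ideal.mem_span_singleton_mul.1 hw
    rw [← hzw, ← commutator_trEl_tau u z]
    exact Subgroup.commutator_mem_commutator
      (trEl_mem_transSub u (neg_mem hz)) (Subgroup.mem_top _)

lemma commutator_top_top (p : ℕ) (hp : u ^ p = 1) (hp0 : p ≠ 0) :
    ⁅(⊤ : Subgroup (GpGrp R u)), ⊤⁆ = transSub R u (Ideal.span {(u : R) - 1}) := by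
  apply le_antisymm
  · rw [Subgroup.commutator_le]
    intro g₁ _ g₂ _
    obtain ⟨a, ha⟩ := g₁.right.2
    obtain ⟨b, hb⟩ := g₂.right.2
    rw [commutator_general u _ _ a b ha.symm hb.symm]
    apply trEl_mem_transSub
    refine add_mem (Ideal.mul_mem_right _ _ ?_) (Ideal.mul_mem_right _ _ ?_)
    · have h0 := neg_mem (zpow_mem_span u p hp hp0 b)
      rwa [neg_sub] at h0
    · exact zpow_mem_span u p hp hp0 a
  · intro g hg
    obtain ⟨w, hw, rfl⟩ := (mem_transSub u).1 hg
    obtain ⟨z, hzw⟩ := Ideal.mem_span_singleton.1 hw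
    rw [hzw, ← commutator_trEl_tau u z]
    exact Subgroup.commutator_mem_commutator (Subgroup.mem_top _) (Subgroup.mem_top _)

lemma lcs_eq (p : ℕ) (hp : u ^ p = 1) (hp0 : p ≠ 0) :
    ∀ n : ℕ, 1 ≤ n → (⊤ : Subgroup (GpGrp R u)).lowerCentralSeries n
      = transSub R u (Ideal.span {(u : R) - 1} ^ n)
  | 1, _ => by
    rw [show (1 : ℕ) = 0 + 1 from rfl, Subgroup.lowerCentralSeries_succ, Subgroup.lowerCentralSeries_zero,
      pow_one]
    exact commutator_top_top u p hp hp0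
  | (n + 2), _ => by
    have h := commutator_transSub_top u p hp hp0 (Ideal.span {(u : R) - 1} ^ (n + 1))
    rw [← pow_succ'] at h
    rw [Subgroup.lowerCentralSeries_succ, lcs_eq p hp hp0 (n + 1) (Nat.le_add_left 1 n)]
    exact h

lemma trEl_inj {v w : R} (h : trEl R u v = trEl R u w) : v = w := by
  simpa [trEl] using h

lemma relindex_transSub (p : ℕ) [IsDomain R] (t : R) (ht : t ≠ 0) (k : ℕ)
    (χ : R →+* ZMod p) (hsurj : Function.Surjective χ)
    (hker : RingHom.ker χ = Ideal.span {t}) :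
    (transSub R u (Ideal.span {t} ^ (k + 1))).relIndex
      (transSub R u (Ideal.span {t} ^ k)) = p := by
  set f2 : Multiplicative R →* Multiplicative R :=
    AddMonoidHom.toMultiplicative (AddMonoidHom.mulLeft (t ^ k)) with hf2
  set f : Multiplicative R →* GpGrp R u := SemidirectProduct.inl.comp f2 with hf
  have hfapp : ∀ x : Multiplicative R, f x = trEl R u (t ^ k * Multiplicative.toAdd x) :=
    fun x => rfl
  have claim_map : Subgroup.map f ⊤ = transSub R u (Ideal.span {t} ^ k) := by
    ext x
    rw [Ideal.span_singleton_pow]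
    constructor
    · rintro ⟨y, -, rfl⟩
      exact trEl_mem_transSub u (Ideal.mem_span_singleton.2 ⟨_, rfl⟩)
    · intro hx
      obtain ⟨v, hv, rfl⟩ := (mem_transSub u).1 hx
      obtain ⟨z, rfl⟩ := Ideal.mem_span_singleton.1 hv
      exact ⟨Multiplicative.ofAdd z, Subgroup.mem_top _, rfl⟩
  have claim_comap : Subgroup.comap f (transSub R u (Ideal.span {t} ^ (k + 1)))
      = AddSubgroup.toSubgroup (Ideal.span {t}).toAddSubgroup := by
    ext x
    rw [Subgroup.mem_comap, hfapp, mem_transSub]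
    constructor
    · rintro ⟨v, hv, hveq⟩
      obtain rfl := trEl_inj u hveq
      rw [Ideal.span_singleton_pow, Ideal.mem_span_singleton, pow_succ] at hv
      obtain ⟨c, hc⟩ := hv
      show Multiplicative.toAdd x ∈ Ideal.span {t}
      refine Ideal.mem_span_singleton.2 ⟨c, mul_left_cancel₀ (pow_ne_zero k ht) ?_⟩
      rw [hc]; ring
    · intro hx
      have hx'' : Multiplicative.toAdd x ∈ Ideal.span {t} := hx
      have hx' : t ∣ Multiplicative.toAdd x := Ideal.mem_span_singleton.1 hx''
      refine ⟨t ^ k * Multiplicative.toAdd x, ?_, rfl⟩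
      rw [Ideal.span_singleton_pow, Ideal.mem_span_singleton, pow_succ]
      exact mul_dvd_mul_left (t ^ k) hx'
  have step := Subgroup.relIndex_comap (H := transSub R u (Ideal.span {t} ^ (k + 1))) f
    (⊤ : Subgroup (Multiplicative R))
  rw [claim_comap, claim_map] at step
  rw [← step, Subgroup.relIndex_top_right]
  set φ : Multiplicative R →* Multiplicative (ZMod p) :=
    AddMonoidHom.toMultiplicative χ.toAddMonoidHom with hφ
  have hkerφ : AddSubgroup.toSubgroup (Ideal.span {t}).toAddSubgroup = φ.ker := by
    ext x
    show Multiplicative.toAdd x ∈ Ideal.span {t} ↔ _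
    rw [← hker]
    show _ ↔ Multiplicative.ofAdd (χ (Multiplicative.toAdd x)) = 1
    exact ⟨fun h => by rw [show χ (Multiplicative.toAdd x) = 0 from h, ofAdd_zero],
      fun h => Multiplicative.ofAdd.injective (by rwa [ofAdd_zero])⟩
  rw [hkerφ, Subgroup.index_ker]
  have hrange : φ.range = ⊤ := MonoidHom.range_eq_top.2 (fun y =>
    (hsurj (Multiplicative.toAdd y)).imp (fun x hx => by
      show Multiplicative.ofAdd (χ x) = y
      rw [hx, ofAdd_toAdd]))
  rw [hrange]
  rw [Nat.card_congr Subgroup.topEquiv.toEquiv,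
    Nat.card_congr (Multiplicative.toAdd (α := ZMod p)), Nat.card_zmod]

section Padic

variable (p : ℕ) [hp : Fact p.Prime] {K : Type} [Field K]
  [Algebra ℚ_[p] K] [Algebra ℤ_[p] K] [IsScalarTower ℤ_[p] ℚ_[p] K]
  (θ : K) (hθ : IsPrimitiveRoot θ p)

include hθ in
lemma theta_integral : IsIntegral ℤ_[p] θ :=
  ⟨Polynomial.X ^ p - Polynomial.C 1, Polynomial.monic_X_pow_sub_C 1 hp.1.ne_zero, by
    simp [Polynomial.eval₂_sub, hθ.pow_eq_one]⟩

include hθ in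
lemma padic_not_unit_p : ¬ IsUnit ((p : ℕ) : ↥(Algebra.adjoin ℤ_[p] {θ})) := by
  intro h
  obtain ⟨w, hw⟩ := isUnit_iff_exists_inv.1 h
  have hwint : IsIntegral ℤ_[p] (w : K) :=
    IsIntegral.of_mem_of_fg _ (theta_integral p θ hθ).fg_adjoin_singleton _ w.2
  have hx0 : ((p : ℚ_[p]) : ℚ_[p]) ≠ 0 := by
    exact_mod_cast hp.1.ne_zero
  have hwK : (p : K) * (w : K) = 1 := by
    have h0 := congrArg (Subtype.val : ↥(Algebra.adjoin ℤ_[p] {θ}) → K) hw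
    rw [MulMemClass.coe_mul, OneMemClass.coe_one] at h0
    rwa [show ((((p : ℕ) : ↥(Algebra.adjoin ℤ_[p] {θ}))) : K) = ((p : ℕ) : K) from
      map_natCast ((Algebra.adjoin ℤ_[p] {θ}).val) p] at h0
  have hpK : (p : K) = algebraMap ℚ_[p] K (p : ℚ_[p]) := by
    rw [map_natCast]
  have hwval : (w : K) = algebraMap ℚ_[p] K ((p : ℚ_[p])⁻¹) := by
    have h1 : algebraMap ℚ_[p] K (p : ℚ_[p]) ≠ 0 := by
      rw [map_ne_zero_iff _ (algebraMap ℚ_[p] K).injective]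
      exact hx0
    apply mul_left_cancel₀ h1
    rw [← map_mul, mul_inv_cancel₀ hx0, map_one, ← hpK]
    exact hwK
  rw [hwval] at hwint
  have hint : IsIntegral ℤ_[p] ((p : ℚ_[p])⁻¹) :=
    (isIntegral_algHom_iff (IsScalarTower.toAlgHom ℤ_[p] ℚ_[p] K)
      (algebraMap ℚ_[p] K).injective).1 hwint
  obtain ⟨y, hy⟩ := IsIntegrallyClosed.isIntegral_iff.1 hint
  have hyp : y * (p : ℤ_[p]) = 1 := by
    have : algebraMap ℤ_[p] ℚ_[p] (y * (p : ℤ_[p])) = algebraMap ℤ_[p] ℚ_[p] 1 := by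
      rw [map_one, map_mul, hy, map_natCast, inv_mul_cancel₀ hx0]
    exact IsFractionRing.injective ℤ_[p] ℚ_[p] this
  have hpunit : IsUnit ((p : ℤ_[p])) := IsUnit.of_mul_eq_one _ ((mul_comm _ _).trans hyp)
  have := PadicInt.isUnit_iff.1 hpunit
  rw [PadicInt.norm_p] at this
  have h2 : (2 : ℝ) ≤ (p : ℝ) := by exact_mod_cast hp.1.two_le
  have : (p : ℝ) = 1 := by
    field_simp at this
    linarith [this]
  linarith

include hθ in
lemma t_pow_mem_span_p :
    ((⟨θ, Algebra.subset_adjoin rfl⟩ : ↥(Algebra.adjoin ℤ_[p] {θ})) - 1) ^ p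
      ∈ Ideal.span {((p : ℕ) : ↥(Algebra.adjoin ℤ_[p] {θ}))} := by
  set O := ↥(Algebra.adjoin ℤ_[p] {θ})
  set θO : O := ⟨θ, Algebra.subset_adjoin rfl⟩
  have hchar : CharP (O ⧸ Ideal.span {((p : ℕ) : O)}) p :=
    CharP.quotient O p (fun h => padic_not_unit_p p θ hθ h)
  have hθp : θO ^ p = 1 := by
    ext
    push_cast
    exact hθ.pow_eq_one
  rw [← Ideal.Quotient.eq_zero_iff_mem]
  have : (Ideal.Quotient.mk (Ideal.span {((p : ℕ) : O)})) ((θO - 1) ^ p)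
      = (Ideal.Quotient.mk _ θO) ^ p - 1 ^ p := by
    rw [map_pow, map_sub, map_one, sub_pow_char]
  rw [this, ← map_pow, hθp, map_one, one_pow, sub_self]

include hθ in
lemma t_not_unit :
    ¬ IsUnit ((⟨θ, Algebra.subset_adjoin rfl⟩ : ↥(Algebra.adjoin ℤ_[p] {θ})) - 1) := by
  intro h
  obtain ⟨c, hc⟩ := Ideal.mem_span_singleton.1 (t_pow_mem_span_p p θ hθ)
  have : IsUnit (((p : ℕ) : ↥(Algebra.adjoin ℤ_[p] {θ})) * c) := hc ▸ h.pow p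
  exact padic_not_unit_p p θ hθ (isUnit_of_mul_isUnit_left this)

include hθ in
lemma p_mem_span_t :
    ((p : ℕ) : ↥(Algebra.adjoin ℤ_[p] {θ})) ∈ Ideal.span
      {(⟨θ, Algebra.subset_adjoin rfl⟩ : ↥(Algebra.adjoin ℤ_[p] {θ})) - 1} := by
  set O := ↥(Algebra.adjoin ℤ_[p] {θ})
  set θO : O := ⟨θ, Algebra.subset_adjoin rfl⟩ with hθO
  have hsum : ∑ j ∈ Finset.range p, θO ^ j = 0 := by
    apply Subtype.val_injective
    have h0 : ((∑ j ∈ Finset.range p, θO ^ j : O) : K) = ∑ j ∈ Finset.range p, θ ^ j := by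
      rw [AddSubmonoidClass.coe_finset_sum]
      exact Finset.sum_congr rfl (fun j _ => by rw [SubmonoidClass.coe_pow])
    rw [h0, hθ.geom_sum_eq_zero hp.1.one_lt]
    rfl
  have hpeq : ((p : ℕ) : O) = ∑ j ∈ Finset.range p, (1 - θO ^ j) := by
    rw [Finset.sum_sub_distrib, hsum, sub_zero, Finset.sum_const, Finset.card_range,
      nsmul_eq_mul, mul_one]
  rw [hpeq]
  refine Submodule.sum_mem _ (fun j _ => ?_)
  rw [Ideal.mem_span_singleton]
  have h1 := sub_dvd_pow_sub_pow θO 1 j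
  rw [one_pow] at h1
  exact (neg_sub (θO ^ j) 1) ▸ dvd_neg.2 h1

include hθ in
lemma exists_chi :
    ∃ χ : ↥(Algebra.adjoin ℤ_[p] {θ}) →+* ZMod p, Function.Surjective χ ∧
      RingHom.ker χ = Ideal.span
        {(⟨θ, Algebra.subset_adjoin rfl⟩ : ↥(Algebra.adjoin ℤ_[p] {θ})) - 1} := by
  set O := ↥(Algebra.adjoin ℤ_[p] {θ})
  set θO : O := ⟨θ, Algebra.subset_adjoin rfl⟩ with hθO
  set J : Ideal O := Ideal.span {θO - 1} with hJ
  set ψ : ℤ_[p] →+* O ⧸ J := (Ideal.Quotient.mk J).comp (algebraMap ℤ_[p] O) with hψ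
  have hθJ : Ideal.Quotient.mk J θO = Ideal.Quotient.mk J 1 :=
    Ideal.Quotient.eq.2 (Ideal.subset_span (Set.mem_singleton _))
  have hψsurj : Function.Surjective ψ := by
    intro y
    obtain ⟨x, rfl⟩ := Ideal.Quotient.mk_surjective y
    obtain ⟨x, hx⟩ := x
    induction hx using Algebra.adjoin_induction with
    | mem a ha =>
      rcases ha with rfl
      refine ⟨1, ?_⟩
      rw [map_one]
      exact hθJ.symm
    | algebraMap r => exact ⟨r, rfl⟩
    | add a b ha hb hia hib =>
      obtain ⟨za, hza⟩ := hia
      obtain ⟨zb, hzb⟩ := hib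
      exact ⟨za + zb, by rw [map_add, hza, hzb, ← map_add]; rfl⟩
    | mul a b ha hb hia hib =>
      obtain ⟨za, hza⟩ := hia
      obtain ⟨zb, hzb⟩ := hib
      exact ⟨za * zb, by rw [map_mul, hza, hzb, ← map_mul]; rfl⟩
  have hJne : J ≠ ⊤ := by
    intro hJt
    exact t_not_unit p θ hθ (Ideal.span_singleton_eq_top.1 (hJ ▸ hJt))
  haveI : Nontrivial (O ⧸ J) := Ideal.Quotient.nontrivial_iff.mpr hJne
  have hker : RingHom.ker ψ = Ideal.span {((p : ℕ) : ℤ_[p])} := by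
    apply le_antisymm
    · have hne : RingHom.ker ψ ≠ ⊤ := by
        rw [Ne, Ideal.eq_top_iff_one, RingHom.mem_ker, map_one]
        exact one_ne_zero
      have hle := IsLocalRing.le_maximalIdeal hne
      rwa [PadicInt.maximalIdeal_eq_span_p] at hle
    · rw [Ideal.span_le, Set.singleton_subset_iff, SetLike.mem_coe, RingHom.mem_ker]
      show (Ideal.Quotient.mk J) (algebraMap ℤ_[p] O ((p : ℕ) : ℤ_[p])) = 0
      rw [map_natCast, Ideal.Quotient.eq_zero_iff_mem]
      exact p_mem_span_t p θ hθ
  have h2 : RingHom.ker (PadicInt.toZMod : ℤ_[p] →+* ZMod p)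
      = Ideal.span {((p : ℕ) : ℤ_[p])} := by
    rw [PadicInt.ker_toZMod, PadicInt.maximalIdeal_eq_span_p]
  let e : O ⧸ J ≃+* ZMod p :=
    ((RingHom.quotientKerEquivOfSurjective hψsurj).symm.trans
      (Ideal.quotEquivOfEq (hker.trans h2.symm))).trans
      (RingHom.quotientKerEquivOfSurjective
        (ZMod.ringHom_surjective (PadicInt.toZMod : ℤ_[p] →+* ZMod p)))
  refine ⟨e.toRingHom.comp (Ideal.Quotient.mk J), ?_, ?_⟩
  · exact e.surjective.comp Ideal.Quotient.mk_surjective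
  · ext x
    rw [RingHom.mem_ker, RingHom.comp_apply, RingEquiv.toRingHom_eq_coe,
      RingEquiv.coe_toRingHom, EmbeddingLike.map_eq_zero_iff,
      Ideal.Quotient.eq_zero_iff_mem]

end Padic

end MaxClassAux

/-- Let `p` be an odd prime, `O = ℤ_p[θ]` with `θ` a primitive `p`-th root of unity over
`ℚ_p`, and `G = O ⋊ C_p` where the generator `τ` of `C_p` acts as multiplication by `θ`.
Then `γ_i(G) = (θ-1)^(i-1) O` for all `i ≥ 2` (note `γ_i(G)` is `lowerCentralSeries G (i-1)`
in Mathlib's indexing), and `γ_i(G)/γ_{i+1}(G) ≅ C_p`, i.e. the relative index of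
`γ_{i+1}(G)` in `γ_i(G)` equals `p`. -/
theorem lowerCentralSeries_maximal_class_group
    (p : ℕ) [Fact p.Prime] (hodd : Odd p) {K : Type} [Field K]
    [Algebra ℚ_[p] K] [Algebra ℤ_[p] K] [IsScalarTower ℤ_[p] ℚ_[p] K]
    (θ : K) (hθ : IsPrimitiveRoot θ p)
    (hK : Algebra.adjoin ℚ_[p] {θ} = ⊤)
    (u : (Algebra.adjoin ℤ_[p] {θ})ˣ)
    (hu : (u : ↥(Algebra.adjoin ℤ_[p] {θ})) = ⟨θ, Algebra.subset_adjoin rfl⟩)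
    (i : ℕ) (hi : 2 ≤ i) :
    Subgroup.lowerCentralSeries (⊤ : Subgroup (GpGrp (↥(Algebra.adjoin ℤ_[p] {θ})) u)) (i - 1)
      = transSub (↥(Algebra.adjoin ℤ_[p] {θ})) u
          (Ideal.span {(⟨θ, Algebra.subset_adjoin rfl⟩ : ↥(Algebra.adjoin ℤ_[p] {θ})) - 1}
            ^ (i - 1)) ∧
    (Subgroup.lowerCentralSeries (⊤ : Subgroup (GpGrp (↥(Algebra.adjoin ℤ_[p] {θ})) u)) i).relIndex
      (Subgroup.lowerCentralSeries (⊤ : Subgroup (GpGrp (↥(Algebra.adjoin ℤ_[p] {θ})) u)) (i - 1)) = p := by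
  have hp : Fact p.Prime := ‹_›
  have hp0 : p ≠ 0 := hp.out.ne_zero
  have hθp1 : (⟨θ, Algebra.subset_adjoin rfl⟩ : ↥(Algebra.adjoin ℤ_[p] {θ})) ^ p = 1 := by
    apply Subtype.val_injective
    push_cast
    exact hθ.pow_eq_one
  have hup : u ^ p = 1 := by
    ext
    rw [Units.val_pow_eq_pow_val, hu, Units.val_one]
    exact congrArg Subtype.val hθp1
  have htne : (⟨θ, Algebra.subset_adjoin rfl⟩ : ↥(Algebra.adjoin ℤ_[p] {θ})) - 1 ≠ 0 := by
    intro h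
    have h1 : (⟨θ, Algebra.subset_adjoin rfl⟩ : ↥(Algebra.adjoin ℤ_[p] {θ})) = 1 := by
      rwa [sub_eq_zero] at h
    exact hθ.ne_one hp.out.one_lt (congrArg Subtype.val h1)
  obtain ⟨χ, hχsurj, hχker⟩ := MaxClassAux.exists_chi p θ hθ
  have hlcs := MaxClassAux.lcs_eq u p hup hp0
  constructor
  · rw [hlcs (i - 1) (by omega), hu]
  · obtain ⟨k, rfl⟩ : ∃ k, i = k + 2 := ⟨i - 2, by omega⟩
    rw [hlcs (k + 2) (by omega), hlcs (k + 2 - 1) (by omega), hu,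
      show k + 2 - 1 = k + 1 from by omega]
    exact MaxClassAux.relindex_transSub u p _ htne (k + 1) χ hχsurj hχker
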